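/- In a convex semilattice with top satisfying x ⊕ ⊤ = ⊤, interpreted on intervals of [0,1] with ⊕ = minmax and +_p the componentwise convex combination and ⊤ = [0,0], the upper endpoint collapses: [x, y₁] = [x, y₂] as elements of the quotient, i.e., the quotient of the interval algebra 𝓘 by the top axiom is isomorphic to ([0,1], min, +_p, 0) via [x,y] ↦ x. -/

import Mathlib

/-- Closed subintervals `[x,y]` of `[0,1]`, as pairs with `0 ≤ x ≤ y ≤ 1`. -/
def II : Type := {q : ℝ × ℝ // 0 ≤ q.1 ∧ q.1 ≤ q.2 ∧ q.2 ≤ 1}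

/-- `[x₁,y₁] ⊕ [x₂,y₂] = [min(x₁,x₂), max(y₁,y₂)]`. -/
noncomputable def iop (s t : II) : II :=
  ⟨(min s.1.1 t.1.1, max s.1.2 t.1.2),
    le_min s.2.1 t.2.1,
    min_le_of_left_le (le_trans s.2.2.1 (le_max_left _ _)),
    max_le s.2.2.2 t.2.2.2⟩

/-- `[x₁,y₁] +_p [x₂,y₂] = [p·x₁+(1-p)·x₂, p·y₁+(1-p)·y₂]`. -/
noncomputable def ipc (p : ℝ) (s t : II) : II :=
  if h : p ∈ Set.Icc (0:ℝ) 1 then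
    ⟨(p * s.1.1 + (1 - p) * t.1.1, p * s.1.2 + (1 - p) * t.1.2), by
      obtain ⟨h0, h1⟩ := h
      refine ⟨?_, ?_, ?_⟩ <;>
        · simp only
          nlinarith [s.2.1, t.2.1, s.2.2.1, t.2.2.1, s.2.2.2, t.2.2.2]⟩
  else s

/-- The interval `[0,0]`. -/
noncomputable def izero : II := ⟨(0, 0), by norm_num⟩

/-- The smallest congruence on the interval algebra containing all instances
of the top axiom `S ⊕ [0,0] = [0,0]`. -/
inductive TopCong : II → II → Prop
  | base (s : II) : TopCong (iop s izero) izero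
  | refl (s : II) : TopCong s s
  | symm {s t : II} : TopCong s t → TopCong t s
  | trans {s t u : II} : TopCong s t → TopCong t u → TopCong s u
  | op_congr {s s' t t' : II} : TopCong s s' → TopCong t t' →
      TopCong (iop s t) (iop s' t')
  | pc_congr (p : ℝ) {s s' t t' : II} : p ∈ Set.Ioo (0:ℝ) 1 →
      TopCong s s' → TopCong t t' → TopCong (ipc p s t) (ipc p s' t')

/-- The quotient of the interval algebra `𝓘` (with `⊕ = minmax`, `+_p`
componentwise, point `[0,0]`) by the top axiom `S ⊕ [0,0] = [0,0]` is
isomorphic, via `[x,y] ↦ x`, to the pointed convex semilattice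
`([0,1], min, +_p, 0)`: the lower-endpoint map identifies exactly the
congruent intervals (so the upper endpoint collapses), is surjective onto
`[0,1]`, and turns the operations into `min`, convex combination, and `0`. -/

lemma iop_fst (s t : II) : (iop s t).1.1 = min s.1.1 t.1.1 := rfl

lemma ipc_fst {p : ℝ} (hp : p ∈ Set.Icc (0:ℝ) 1) (s t : II) :
    (ipc p s t).1.1 = p * s.1.1 + (1 - p) * t.1.1 := by
  unfold ipc
  exact congrArg (fun u : II => u.1.1) (dif_pos hp)

lemma topCong_fst {s t : II} (h : TopCong s t) : s.1.1 = t.1.1 := by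
  induction h with
  | base s => rw [iop_fst]; simp [izero, min_eq_right s.2.1]
  | refl s => rfl
  | symm _ ih => exact ih.symm
  | trans _ _ ih1 ih2 => exact ih1.trans ih2
  | op_congr _ _ ih1 ih2 => simp [iop_fst, ih1, ih2]
  | pc_congr p hp _ _ ih1 ih2 =>
      rw [ipc_fst (Set.mem_Icc_of_Ioo hp), ipc_fst (Set.mem_Icc_of_Ioo hp), ih1, ih2]

lemma cong_zero (s : II) (h : s.1.1 = 0) : TopCong s izero := by
  have h2 : (0:ℝ) ≤ s.1.2 := le_trans (le_of_eq h.symm) s.2.2.1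
  have hs : s = iop s izero := by
    apply Subtype.ext
    refine Prod.ext ?_ ?_
    · simp [iop, izero, h]
    · simp [iop, izero, max_eq_left h2]
  exact hs ▸ TopCong.base s

lemma collapse (s : II) :
    TopCong s ⟨(s.1.1, s.1.1), s.2.1, le_refl _, s.2.2.1.trans s.2.2.2⟩ := by
  obtain ⟨⟨x, y⟩, hx0, hxy, hy1⟩ := s
  dsimp only at hx0 hxy hy1 ⊢
  rcases eq_or_lt_of_le (hxy.trans hy1) with h1 | h1
  · -- x = 1, so y = 1 = x
    have hy : y = x := le_antisymm (h1 ▸ hy1) hxy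
    subst hy
    exact TopCong.refl _
  rcases eq_or_lt_of_le hx0 with h0 | h0
  · -- x = 0
    have htgt : (⟨(x, x), hx0, le_refl _, hxy.trans hy1⟩ : II) = izero := by
      apply Subtype.ext; simp [izero, ← h0]
    rw [htgt]
    exact cong_zero _ h0.symm
  · -- 0 < x < 1
    set c : ℝ := (y - x) / (1 - x) with hc
    have h1x : (0:ℝ) < 1 - x := by linarith
    have hc0 : 0 ≤ c := div_nonneg (by linarith) h1x.le
    have hc1 : c ≤ 1 := by rw [div_le_one h1x]; linarith
    have hcy : x + (1 - x) * c = y := by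
      rw [hc, mul_div_cancel₀ _ h1x.ne']; ring
    have key : TopCong
        (ipc x ⟨((1:ℝ),(1:ℝ)), by norm_num⟩ ⟨((0:ℝ), c), le_refl _, hc0, hc1⟩)
        (ipc x ⟨((1:ℝ),(1:ℝ)), by norm_num⟩ izero) :=
      TopCong.pc_congr x ⟨h0, h1⟩ (TopCong.refl _) (cong_zero _ rfl)
    have e1 : ipc x ⟨((1:ℝ),(1:ℝ)), by norm_num⟩ ⟨((0:ℝ), c), le_refl _, hc0, hc1⟩ =
        (⟨(x, y), hx0, hxy, hy1⟩ : II) := by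
      unfold ipc
      refine (dif_pos (Set.mem_Icc.mpr ⟨hx0, h1.le⟩)).trans ?_
      apply Subtype.ext
      simp only [Prod.mk.injEq]
      exact ⟨by ring, by linarith⟩
    have e2 : ipc x ⟨((1:ℝ),(1:ℝ)), by norm_num⟩ izero =
        (⟨(x, x), hx0, le_refl _, hxy.trans hy1⟩ : II) := by
      unfold ipc
      refine (dif_pos (Set.mem_Icc.mpr ⟨hx0, h1.le⟩)).trans ?_
      apply Subtype.ext
      simp [izero]
    rw [e1, e2] at key
    exact key

theorem interval_top_quotient_iso_min :
    (∀ s t : II, TopCong s t ↔ s.1.1 = t.1.1) ∧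
    (∀ x ∈ Set.Icc (0:ℝ) 1, ∃ s : II, s.1.1 = x) ∧
    (∀ s t : II, (iop s t).1.1 = min s.1.1 t.1.1) ∧
    (∀ p ∈ Set.Ioo (0:ℝ) 1, ∀ s t : II,
      (ipc p s t).1.1 = p * s.1.1 + (1 - p) * t.1.1) ∧
    izero.1.1 = 0 := by
  refine ⟨?_, ?_, fun s t => rfl, fun p hp s t => ipc_fst (Set.mem_Icc_of_Ioo hp) s t, rfl⟩
  · intro s t
    constructor
    · exact topCong_fst
    · intro h
      have hs := collapse s
      have ht := collapse t
      have heq : (⟨(s.1.1, s.1.1), s.2.1, le_refl _, s.2.2.1.trans s.2.2.2⟩ : II) =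
          ⟨(t.1.1, t.1.1), t.2.1, le_refl _, t.2.2.1.trans t.2.2.2⟩ := by
        apply Subtype.ext; simp [h]
      exact hs.trans (heq ▸ ht.symm)
  · intro x hx
    exact ⟨⟨(x, x), hx.1, le_refl _, hx.2⟩, rfl⟩
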